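/- Let k be a commutative ring, A a commutative k-algebra, R a k-algebra over A, and Ψ a pre-HS-structure on R over A/k. Define Γ^p_Δ(D) := Ψ^p_Δ(D*) ∈ U^p(R^opp;Δ) for every p, Δ and D ∈ HS^p_k(A;Δ), where R^opp is the opposite ring of R. The following are equivalent: (1) Γ is a HS-structure on R^opp over A/k; (2) for all p, q ∈ ℕ, all nonempty co-ideals Δ ⊆ ℕ^p and ∇ ⊆ ℕ^q, every substitution map φ : A[[s]]_Δ → A[[t]]_∇ and every D ∈ HS^p_k(A;Δ), one has Ψ^q_∇(φ•D) = Ψ^p_Δ(D)•φ^D. -/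

import Mathlib

open scoped Classical

namespace HS

/-- multi-indices in `ℕ^p` -/
abbrev MIdx (p : ℕ) := Fin p → ℕ

/-- the total weight `|α|` of a multi-index -/
def wt {p : ℕ} (α : MIdx p) : ℕ := ∑ i, α i

/-- a non-empty co-ideal of `ℕ^p` -/
def IsCoideal {p : ℕ} (Δ : Set (MIdx p)) : Prop :=
  Δ.Nonempty ∧ ∀ ⦃α : MIdx p⦄, α ∈ Δ → ∀ ⦃β : MIdx p⦄, β ≤ α → β ∈ Δ

/-- Convolution product of two power series, given by their coefficient families:
this is the multiplication of `R[[s]]_Δ` (in terms of representatives). -/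
def sconv {p : ℕ} {R : Type*} [NonUnitalNonAssocSemiring R] (f g : MIdx p → R) : MIdx p → R :=
  fun α => ∑ β ∈ Finset.Iic α, f β * g (α - β)

/-- Applying a series of linear operators to a series of module elements; for an
operator family `f`, `fapply f` is the induced `k[[s]]_Δ`-linear map `f̃ = ∑ f_β s^β`. -/
def fapply {p : ℕ} {k M N : Type*} [Semiring k] [AddCommMonoid M] [AddCommMonoid N]
    [Module k M] [Module k N] (f : MIdx p → (M →ₗ[k] N)) (m : MIdx p → M) : MIdx p → N :=
  fun α => ∑ β ∈ Finset.Iic α, f β (m (α - β))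

/-- a series of scalars acting on a series of module elements:
the module structure of `M[[s]]_Δ` over `A[[s]]_Δ` (in terms of representatives). -/
def smul' {p : ℕ} {A M : Type*} [Semiring A] [AddCommMonoid M] [Module A M]
    (a : MIdx p → A) (m : MIdx p → M) : MIdx p → M :=
  fun α => ∑ β ∈ Finset.Iic α, a β • m (α - β)

/-- the unit (delta) series `1` -/
def one' {p : ℕ} {R : Type*} [Zero R] [One R] : MIdx p → R :=
  fun α => if α = 0 then 1 else 0

/-- `D` is a `(p,Δ)`-variate Hasse–Schmidt derivation of `A` over `k`:
`D_0 = id` and the Leibniz rule `D_α(xy) = ∑_{β+γ=α} D_β(x) D_γ(y)` for `α ∈ Δ`. -/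
def IsHS (k A : Type*) [CommRing k] [CommRing A] [Algebra k A] {p : ℕ}
    (Δ : Set (MIdx p)) (D : MIdx p → Module.End k A) : Prop :=
  D 0 = 1 ∧ ∀ α ∈ Δ, ∀ x y : A,
    D α (x * y) = ∑ β ∈ Finset.Iic α, D β x * D (α - β) y

/-- A substitution map `φ : A[[s]]_Δ → A[[t]]_∇`, modelled by the family of its
coefficients `C α e = C_e(φ,α)` (the coefficient of `t^e` in `φ(s^α)`):
it is multiplicative on monomials, unital, of order `≥ 1` (so `C α e = 0` for
`|e| < |α|`), kills the classes of monomials `s^α` with `α ∉ Δ`, and is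
normalized to vanish outside `∇`. -/
structure SubstMap (A : Type*) [CommRing A] (p q : ℕ)
    (Δ : Set (MIdx p)) (nab : Set (MIdx q)) where
  C : MIdx p → MIdx q → A
  c_zero : ∀ e ∈ nab, C 0 e = if e = 0 then 1 else 0
  c_mul : ∀ α ∈ Δ, ∀ β ∈ Δ, ∀ e ∈ nab,
    C (α + β) e = ∑ u ∈ Finset.Iic e, C α u * C β (e - u)
  c_ord : ∀ α ∈ Δ, ∀ e ∈ nab, wt e < wt α → C α e = 0
  c_suppL : ∀ α : MIdx p, α ∉ Δ → ∀ e : MIdx q, C α e = 0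
  c_suppR : ∀ (α : MIdx p) (e : MIdx q), e ∉ nab → C α e = 0

variable {A' : Type*} [CommRing A'] {p' q' : ℕ} {Δ' : Set (MIdx p')} {nab' : Set (MIdx q')}

/-- the map `A[[s]]_Δ → A[[t]]_∇` induced by a substitution map -/
def SubstMap.app (φ : SubstMap A' p' q' Δ' nab') (f : MIdx p' → A') : MIdx q' → A' :=
  fun e => ∑ α ∈ Finset.Iic (fun _ => wt e : MIdx p'), φ.C α e * f α

/-- `φ • D` for a series of `k`-linear endomorphisms of `A` -/
def SubstMap.bulletEnd {k : Type*} [CommRing k] [Algebra k A']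
    (φ : SubstMap A' p' q' Δ' nab') (D : MIdx p' → Module.End k A') :
    MIdx q' → Module.End k A' :=
  fun e => ∑ α ∈ Finset.Iic (fun _ => wt e : MIdx p'), φ.C α e • D α

/-- `φ • r` for a series with coefficients in a `k`-algebra `S` over `A`
(with structural map `ι : A → S`) -/
def SubstMap.bulletS {S : Type*} [Ring S] (ι : A' → S)
    (φ : SubstMap A' p' q' Δ' nab') (r : MIdx p' → S) : MIdx q' → S :=
  fun e => ∑ α ∈ Finset.Iic (fun _ => wt e : MIdx p'), ι (φ.C α e) * r α

/-- `r • φ` for a series with coefficients in a `k`-algebra `S` over `A` -/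
def SubstMap.bulletSR {S : Type*} [Ring S] (ι : A' → S)
    (φ : SubstMap A' p' q' Δ' nab') (r : MIdx p' → S) : MIdx q' → S :=
  fun e => ∑ α ∈ Finset.Iic (fun _ => wt e : MIdx p'), r α * ι (φ.C α e)

/-- `φ • m` for a series with coefficients in an `A`-module `M` -/
def SubstMap.bulletM {M : Type*} [AddCommMonoid M] [Module A' M]
    (φ : SubstMap A' p' q' Δ' nab') (m : MIdx p' → M) : MIdx q' → M :=
  fun e => ∑ α ∈ Finset.Iic (fun _ => wt e : MIdx p'), φ.C α e • m α

/-- `φ` has constant coefficients, i.e. all the `C_e(φ,α)` come from `k` -/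
def SubstMap.HasConstCoeffs (k : Type*) [CommRing k] [Algebra k A']
    (φ : SubstMap A' p' q' Δ' nab') : Prop :=
  ∀ (α : MIdx p') (e : MIdx q'), φ.C α e ∈ Set.range (algebraMap k A')

/-- a system of maps `Ψ^p_Δ : HS^p_k(A;Δ) → U^p(R;Δ)` on a `k`-algebra `R` over `A` -/
abbrev RSystem (k A R : Type*) [CommRing k] [CommRing A] [Algebra k A] : Type _ :=
  ∀ (p : ℕ) (Δ : Set (MIdx p)), (MIdx p → Module.End k A) → (MIdx p → R)

/-- `Ψ` is a pre-HS-structure on the `k`-algebra `R` over `A` (structural map `ι`):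
each `Ψ^p_Δ(D)` lies in `U^p(R;Δ)`, depends only on the class of `D`, the `Ψ^p_Δ`
are group homomorphisms, `Ψ^p_Δ(D)` is a `D`-element (Leibniz rule), and
`Ψ^q_∇(φ•D) = φ•Ψ^p_Δ(D)` for substitution maps `φ` with constant coefficients. -/
def IsPreHSStr (k A R : Type*) [CommRing k] [CommRing A] [Algebra k A]
    [Ring R] [Algebra k R] (ι : A → R) (Ψ : RSystem k A R) : Prop :=
  ∀ (p : ℕ) (Δ : Set (MIdx p)), IsCoideal Δ →
    ∀ D : MIdx p → Module.End k A, IsHS k A Δ D →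
      (Ψ p Δ D 0 = 1)
      ∧ (∀ D' : MIdx p → Module.End k A, IsHS k A Δ D' → (∀ α ∈ Δ, D α = D' α) →
          ∀ α ∈ Δ, Ψ p Δ D α = Ψ p Δ D' α)
      ∧ (∀ E : MIdx p → Module.End k A, IsHS k A Δ E →
          ∀ α ∈ Δ, Ψ p Δ (sconv D E) α = sconv (Ψ p Δ D) (Ψ p Δ E) α)
      ∧ (∃ t : MIdx p → R,
          (∀ α ∈ Δ, sconv (Ψ p Δ D) t α = (one' : MIdx p → R) α)
          ∧ (∀ α ∈ Δ, sconv t (Ψ p Δ D) α = (one' : MIdx p → R) α))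
      ∧ (∀ a : MIdx p → A, ∀ α ∈ Δ,
          sconv (Ψ p Δ D) (fun γ => ι (a γ)) α
            = sconv (fun γ => ι (fapply D a γ)) (Ψ p Δ D) α)
      ∧ (∀ (q : ℕ) (nab : Set (MIdx q)), IsCoideal nab →
          ∀ φ : SubstMap A p q Δ nab, φ.HasConstCoeffs k →
          ∀ e ∈ nab, Ψ q nab (φ.bulletEnd D) e = φ.bulletS ι (Ψ p Δ D) e)

/-- `Ψ` is a HS-structure on the `k`-algebra `R` over `A`: as `IsPreHSStr`, but
with compatibility with the action of arbitrary substitution maps. -/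
def IsHSStr (k A R : Type*) [CommRing k] [CommRing A] [Algebra k A]
    [Ring R] [Algebra k R] (ι : A → R) (Ψ : RSystem k A R) : Prop :=
  ∀ (p : ℕ) (Δ : Set (MIdx p)), IsCoideal Δ →
    ∀ D : MIdx p → Module.End k A, IsHS k A Δ D →
      (Ψ p Δ D 0 = 1)
      ∧ (∀ D' : MIdx p → Module.End k A, IsHS k A Δ D' → (∀ α ∈ Δ, D α = D' α) →
          ∀ α ∈ Δ, Ψ p Δ D α = Ψ p Δ D' α)
      ∧ (∀ E : MIdx p → Module.End k A, IsHS k A Δ E →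
          ∀ α ∈ Δ, Ψ p Δ (sconv D E) α = sconv (Ψ p Δ D) (Ψ p Δ E) α)
      ∧ (∃ t : MIdx p → R,
          (∀ α ∈ Δ, sconv (Ψ p Δ D) t α = (one' : MIdx p → R) α)
          ∧ (∀ α ∈ Δ, sconv t (Ψ p Δ D) α = (one' : MIdx p → R) α))
      ∧ (∀ a : MIdx p → A, ∀ α ∈ Δ,
          sconv (Ψ p Δ D) (fun γ => ι (a γ)) α
            = sconv (fun γ => ι (fapply D a γ)) (Ψ p Δ D) α)
      ∧ (∀ (q : ℕ) (nab : Set (MIdx q)), IsCoideal nab →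
          ∀ φ : SubstMap A p q Δ nab,
          ∀ e ∈ nab, Ψ q nab (φ.bulletEnd D) e = φ.bulletS ι (Ψ p Δ D) e)


variable {p : ℕ}

lemma wt_mono {α β : MIdx p} (h : β ≤ α) : wt β ≤ wt α :=
  Finset.sum_le_sum fun i _ => h i

lemma wt_add (α β : MIdx p) : wt (α + β) = wt α + wt β := by
  simp [wt, Finset.sum_add_distrib]

lemma wt_eq_zero {α : MIdx p} (h : wt α = 0) : α = 0 := by
  funext i
  have := Finset.sum_eq_zero_iff.mp h i (Finset.mem_univ i)
  simpa using this

lemma wt_lt_of_lt {α β : MIdx p} (h : β ≤ α) (hne : β ≠ α) : wt β < wt α := by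
  rcases lt_of_le_of_ne h hne with h'
  obtain ⟨i, hi⟩ : ∃ i, β i < α i := by
    by_contra hc
    push_neg at hc
    exact hne (le_antisymm h fun i => hc i)
  exact Finset.sum_lt_sum (fun i _ => h i) ⟨i, Finset.mem_univ i, hi⟩

lemma mem_box {α : MIdx p} {n : ℕ} (h : wt α ≤ n) : α ∈ Finset.Iic (fun _ => n : MIdx p) := by
  refine Finset.mem_Iic.mpr fun i => ?_
  exact le_trans (Finset.single_le_sum (f := fun j => α j) (fun j _ => Nat.zero_le _) (Finset.mem_univ i)) h

lemma wt_gt_of_not_mem_box {α : MIdx p} {n : ℕ}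
    (h : α ∉ Finset.Iic (fun _ => n : MIdx p)) : n < wt α := by
  by_contra hc
  exact h (mem_box (Nat.le_of_not_lt hc))

lemma coideal_zero_mem {Δ : Set (MIdx p)} (hΔ : IsCoideal Δ) : (0 : MIdx p) ∈ Δ := by
  obtain ⟨α, hα⟩ := hΔ.1
  exact hΔ.2 hα (fun i => Nat.zero_le _)

lemma coideal_mem_of_le {Δ : Set (MIdx p)} (hΔ : IsCoideal Δ) {α β : MIdx p}
    (hα : α ∈ Δ) (h : β ≤ α) : β ∈ Δ := hΔ.2 hα h

/-- reflection of a sum over `Iic α` -/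
lemma sum_Iic_reflect {M : Type*} [AddCommMonoid M] (α : MIdx p) (F : MIdx p → MIdx p → M) :
    ∑ β ∈ Finset.Iic α, F β (α - β) = ∑ β ∈ Finset.Iic α, F (α - β) β := by
  refine Finset.sum_nbij' (fun β => α - β) (fun β => α - β) ?_ ?_ ?_ ?_ ?_
  · intro β hβ; exact Finset.mem_Iic.mpr tsub_le_self
  · intro β hβ; exact Finset.mem_Iic.mpr tsub_le_self
  · intro β hβ; exact tsub_tsub_cancel_of_le (Finset.mem_Iic.mp hβ)
  · intro β hβ; exact tsub_tsub_cancel_of_le (Finset.mem_Iic.mp hβ)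
  · intro β hβ; rw [tsub_tsub_cancel_of_le (Finset.mem_Iic.mp hβ)]

/-- renesting of double sums over `Iic` -/
lemma sum_Iic_nest {M : Type*} [AddCommMonoid M] (α : MIdx p)
    (G : MIdx p → MIdx p → MIdx p → M) :
    ∑ β ∈ Finset.Iic α, ∑ γ ∈ Finset.Iic β, G γ (β - γ) (α - β)
      = ∑ x ∈ Finset.Iic α, ∑ y ∈ Finset.Iic (α - x), G x y (α - x - y) := by
  rw [Finset.sum_sigma', Finset.sum_sigma']
  refine Finset.sum_nbij' (fun q => ⟨q.2, q.1 - q.2⟩) (fun q => ⟨q.1 + q.2, q.1⟩) ?_ ?_ ?_ ?_ ?_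
  · rintro ⟨β, γ⟩ hq
    simp only [Finset.mem_sigma, Finset.mem_Iic] at hq ⊢
    exact ⟨le_trans hq.2 hq.1, tsub_le_tsub_right hq.1 γ⟩
  · rintro ⟨x, y⟩ hq
    simp only [Finset.mem_sigma, Finset.mem_Iic] at hq ⊢
    constructor
    · calc x + y ≤ x + (α - x) := by gcongr; exact hq.2
        _ = α := add_tsub_cancel_of_le hq.1
    · exact le_add_right le_rfl
  · rintro ⟨β, γ⟩ hq
    simp only [Finset.mem_sigma, Finset.mem_Iic] at hq
    simp [add_tsub_cancel_of_le hq.2]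
  · rintro ⟨x, y⟩ hq
    simp only [Finset.mem_sigma, Finset.mem_Iic] at hq
    simp [add_tsub_cancel_left]
  · rintro ⟨β, γ⟩ hq
    simp only [Finset.mem_sigma, Finset.mem_Iic] at hq
    have h1 : α - γ - (β - γ) = α - β := by
      rw [tsub_tsub, add_tsub_cancel_of_le hq.2]
    simp [h1]

/-- swapping of double sums over `Iic` -/
lemma sum_Iic_swap {M : Type*} [AddCommMonoid M] (α : MIdx p)
    (F : MIdx p → MIdx p → M) :
    ∑ x ∈ Finset.Iic α, ∑ y ∈ Finset.Iic (α - x), F x y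
      = ∑ y ∈ Finset.Iic α, ∑ x ∈ Finset.Iic (α - y), F x y := by
  rw [Finset.sum_sigma', Finset.sum_sigma']
  refine Finset.sum_nbij' (fun q => ⟨q.2, q.1⟩) (fun q => ⟨q.2, q.1⟩) ?_ ?_ ?_ ?_ ?_
  · rintro ⟨x, y⟩ hq
    simp only [Finset.mem_sigma, Finset.mem_Iic] at hq ⊢
    have hxy : x + y ≤ α := by
      calc x + y ≤ x + (α - x) := by gcongr; exact hq.2
        _ = α := add_tsub_cancel_of_le hq.1
    exact ⟨le_trans (le_add_left le_rfl) hxy, le_tsub_of_add_le_right hxy⟩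
  · rintro ⟨y, x⟩ hq
    simp only [Finset.mem_sigma, Finset.mem_Iic] at hq ⊢
    have hxy : y + x ≤ α := by
      calc y + x ≤ y + (α - y) := by gcongr; exact hq.2
        _ = α := add_tsub_cancel_of_le hq.1
    exact ⟨le_trans (le_add_left le_rfl) hxy, le_tsub_of_add_le_right hxy⟩
  · rintro ⟨x, y⟩ _; rfl
  · rintro ⟨x, y⟩ _; rfl
  · rintro ⟨x, y⟩ _; rfl
section ConvAlg
variable {p : ℕ} {R : Type*} [Ring R]

lemma Iic_zero_midx : (Finset.Iic (0 : MIdx p)) = {0} := by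
  ext β; simp [Finset.mem_Iic, le_zero_iff]

lemma sconv_zero_coeff (f g : MIdx p → R) : sconv f g 0 = f 0 * g 0 := by
  simp [sconv, Iic_zero_midx]

lemma sconv_one' (f : MIdx p → R) : sconv f one' = f := by
  funext α
  rw [sconv]
  rw [Finset.sum_eq_single α]
  · simp [one']
  · intro β hβ hne
    have : ¬ (α - β = 0) := by
      intro h0
      exact hne (le_antisymm (Finset.mem_Iic.mp hβ) (tsub_eq_zero_iff_le.mp h0))
    simp [one', this]
  · intro h; exact absurd (Finset.mem_Iic.mpr le_rfl) h

lemma one'_sconv (f : MIdx p → R) : sconv one' f = f := by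
  funext α
  rw [sconv]
  rw [Finset.sum_eq_single 0]
  · simp [one']
  · intro β hβ hne; simp [one', hne]
  · intro h; exact absurd (Finset.mem_Iic.mpr zero_le) h

lemma sconv_congr {Δ : Set (MIdx p)} (hΔ : IsCoideal Δ) {f f' g g' : MIdx p → R}
    (hf : ∀ β ∈ Δ, f β = f' β) (hg : ∀ β ∈ Δ, g β = g' β) :
    ∀ α ∈ Δ, sconv f g α = sconv f' g' α := by
  intro α hα
  refine Finset.sum_congr rfl fun β hβ => ?_
  have hβΔ := hΔ.2 hα (Finset.mem_Iic.mp hβ)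
  have hβΔ' := hΔ.2 hα (tsub_le_self : α - β ≤ α)
  rw [hf β hβΔ, hg _ hβΔ']

lemma sconv_assoc (f g h : MIdx p → R) : sconv (sconv f g) h = sconv f (sconv g h) := by
  funext α
  have L : sconv (sconv f g) h α
      = ∑ β ∈ Finset.Iic α, ∑ γ ∈ Finset.Iic β, f γ * g (β - γ) * h (α - β) := by
    rw [sconv]
    exact Finset.sum_congr rfl fun β _ => Finset.sum_mul ..
  have R : sconv f (sconv g h) α
      = ∑ x ∈ Finset.Iic α, ∑ y ∈ Finset.Iic (α - x), f x * (g y * h (α - x - y)) := by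
    rw [sconv]
    exact Finset.sum_congr rfl fun β _ => Finset.mul_sum ..
  rw [L, R, sum_Iic_nest α (fun x y z => f x * g y * h z)]
  exact Finset.sum_congr rfl fun x _ => Finset.sum_congr rfl fun y _ => mul_assoc ..

end ConvAlg

section FApply
variable {p : ℕ} {k A : Type*} [CommRing k] [CommRing A] [Algebra k A]

lemma fapply_congr_op {Δ : Set (MIdx p)} (hΔ : IsCoideal Δ)
    {f f' : MIdx p → Module.End k A} {m m' : MIdx p → A}
    (hf : ∀ β ∈ Δ, f β = f' β) (hm : ∀ β ∈ Δ, m β = m' β) :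
    ∀ α ∈ Δ, fapply f m α = fapply f' m' α := by
  intro α hα
  refine Finset.sum_congr rfl fun β hβ => ?_
  rw [hf β (hΔ.2 hα (Finset.mem_Iic.mp hβ)), hm _ (hΔ.2 hα (tsub_le_self : α - β ≤ α))]

lemma fapply_end (f g : MIdx p → Module.End k A) (x : A) (α : MIdx p) :
    fapply f (fun γ => g γ x) α = sconv f g α x := by
  rw [fapply, sconv, LinearMap.sum_apply]
  exact Finset.sum_congr rfl fun β _ => (Module.End.mul_apply ..).symm

lemma fapply_one' (m : MIdx p → A) : fapply (one' : MIdx p → Module.End k A) m = m := by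
  funext α
  rw [fapply, Finset.sum_eq_single 0]
  · simp [one']
  · intro β hβ hne
    simp [one', hne]
  · intro h; exact absurd (Finset.mem_Iic.mpr zero_le) h

lemma fapply_fapply (f g : MIdx p → Module.End k A) (m : MIdx p → A) :
    fapply f (fapply g m) = fapply (sconv f g) m := by
  funext α
  show ∑ β ∈ Finset.Iic α, f β (∑ γ ∈ Finset.Iic (α - β), g γ (m (α - β - γ))) = _
  rw [show (∑ β ∈ Finset.Iic α, f β (∑ γ ∈ Finset.Iic (α - β), g γ (m (α - β - γ))))
      = ∑ β ∈ Finset.Iic α, ∑ γ ∈ Finset.Iic (α - β), f β (g γ (m (α - β - γ))) from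
    Finset.sum_congr rfl fun β _ => map_sum ..]
  rw [show (fapply (sconv f g) m α)
      = ∑ β ∈ Finset.Iic α, ∑ γ ∈ Finset.Iic β, (f γ) ((g (β - γ)) (m (α - β))) from ?_]
  · rw [sum_Iic_nest α (fun x y z => f x (g y (m z)))]
  · rw [fapply]
    refine Finset.sum_congr rfl fun β _ => ?_
    rw [sconv, LinearMap.sum_apply]
    exact Finset.sum_congr rfl fun γ _ => Module.End.mul_apply ..

end FApply
section HSLemmas
variable {p : ℕ} {k A : Type*} [CommRing k] [CommRing A] [Algebra k A]

lemma one'_end_apply (α : MIdx p) (x : A) :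
    (one' α : Module.End k A) x = (if α = 0 then x else 0) := by
  by_cases h : α = 0 <;> simp [one', h]

/-- an HS-derivation sends `1` to the delta series -/
lemma hs_one {Δ : Set (MIdx p)} (hΔ : IsCoideal Δ) {Z : MIdx p → Module.End k A}
    (hZ : IsHS k A Δ Z) : ∀ α ∈ Δ, Z α 1 = (if α = 0 then (1 : A) else 0) := by
  have H : ∀ n : ℕ, ∀ α ∈ Δ, wt α = n → Z α 1 = (if α = 0 then (1 : A) else 0) := by
    intro n
    induction n using Nat.strong_induction_on with
    | _ n ih =>
      intro α hα hn
      by_cases h0 : α = 0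
      · simp [h0, hZ.1]
      · simp only [h0, if_false]
        have hli := hZ.2 α hα 1 1
        rw [mul_one] at hli
        have hmid : ∀ β ∈ (Finset.Iic α).erase 0, Z β 1 * Z (α - β) 1
            = (if β = α then Z 0 1 * Z α 1 else 0) := by
          intro β hβ
          rcases Finset.mem_erase.mp hβ with ⟨hne0, hβ'⟩
          by_cases hβα : β = α
          · subst hβα; simp [mul_comm]
          · have hβΔ := hΔ.2 hα (Finset.mem_Iic.mp hβ')
            have hwl : wt β < n := hn ▸ wt_lt_of_lt (Finset.mem_Iic.mp hβ') hβα
            have hz : Z β 1 = 0 := by simpa [hne0] using ih (wt β) hwl β hβΔ rfl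
            simp [hz, hβα]
        have hsum : ∑ β ∈ Finset.Iic α, Z β 1 * Z (α - β) 1 = Z α 1 + Z α 1 := by
          rw [← Finset.add_sum_erase _ _ (Finset.mem_Iic.mpr (zero_le : (0 : MIdx p) ≤ α)),
            Finset.sum_congr rfl hmid, Finset.sum_ite_eq' ]
          have hαmem : α ∈ (Finset.Iic α).erase 0 :=
            Finset.mem_erase.mpr ⟨h0, Finset.mem_Iic.mpr le_rfl⟩
          simp [hαmem, hZ.1]
        rw [hsum] at hli
        exact left_eq_add.mp hli
  intro α hα
  exact H (wt α) α hα rfl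

/-- `Z̃` is multiplicative: `fapply` of an HS-derivation intertwines `sconv` -/
lemma fapply_mul {Δ : Set (MIdx p)} (hΔ : IsCoideal Δ) {Z : MIdx p → Module.End k A}
    (hZ : IsHS k A Δ Z) (f g : MIdx p → A) :
    ∀ α ∈ Δ, fapply Z (sconv f g) α = sconv (fapply Z f) (fapply Z g) α := by
  intro α hα
  have L1 : fapply Z (sconv f g) α
      = ∑ v ∈ Finset.Iic α, ∑ u ∈ Finset.Iic (α - v),
          ∑ a ∈ Finset.Iic v, Z a (f u) * Z (v - a) (g (α - v - u)) := by
    rw [fapply]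
    refine Finset.sum_congr rfl fun v hv => ?_
    rw [sconv, map_sum]
    refine Finset.sum_congr rfl fun u _ => ?_
    exact hZ.2 v (hΔ.2 hα (Finset.mem_Iic.mp hv)) (f u) (g (α - v - u))
  rw [L1, sum_Iic_swap α (fun v u => ∑ a ∈ Finset.Iic v, Z a (f u) * Z (v - a) (g (α - v - u)))]
  have L2 : ∑ u ∈ Finset.Iic α, ∑ v ∈ Finset.Iic (α - u),
        ∑ a ∈ Finset.Iic v, Z a (f u) * Z (v - a) (g (α - v - u))
      = ∑ u ∈ Finset.Iic α, ∑ a ∈ Finset.Iic (α - u),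
        ∑ b ∈ Finset.Iic (α - u - a), Z a (f u) * Z b (g (α - u - a - b)) := by
    refine Finset.sum_congr rfl fun u _ => ?_
    rw [← sum_Iic_nest (α - u) (fun x y z => Z x (f u) * Z y (g z))]
    refine Finset.sum_congr rfl fun v _ => Finset.sum_congr rfl fun a _ => ?_
    rw [tsub_right_comm]
  rw [L2, sum_Iic_swap α (fun u a => ∑ b ∈ Finset.Iic (α - u - a),
    Z a (f u) * Z b (g (α - u - a - b)))]
  have R1 : sconv (fapply Z f) (fapply Z g) α
      = ∑ w ∈ Finset.Iic α, ∑ a ∈ Finset.Iic w,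
          Z a (f (w - a)) * ∑ b ∈ Finset.Iic (α - w), Z b (g (α - w - b)) := by
    rw [sconv]
    exact Finset.sum_congr rfl fun w _ => Finset.sum_mul ..
  rw [R1, sum_Iic_nest α (fun x y z => Z x (f y) * ∑ b ∈ Finset.Iic z, Z b (g (z - b)))]
  refine Finset.sum_congr rfl fun a _ => Finset.sum_congr rfl fun u hu => ?_
  rw [Finset.mul_sum]
  have h1 : α - a - u = α - u - a := tsub_right_comm
  rw [h1]

end HSLemmas
section HSLemmas2
variable {p : ℕ} {k A : Type*} [CommRing k] [CommRing A] [Algebra k A]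

/-- the product of two HS-derivations is an HS-derivation -/
lemma sconv_isHS {Δ : Set (MIdx p)} (hΔ : IsCoideal Δ) {D E : MIdx p → Module.End k A}
    (hD : IsHS k A Δ D) (hE : IsHS k A Δ E) : IsHS k A Δ (sconv D E) := by
  constructor
  · rw [sconv_zero_coeff, hD.1, hE.1, one_mul]
  · intro α hα x y
    have h1 : HS.sconv D E α (x * y) = fapply D (fun γ => E γ (x * y)) α :=
      (fapply_end D E (x * y) α).symm
    have h2 : fapply D (fun γ => E γ (x * y)) α
        = fapply D (HS.sconv (fun γ => E γ x) (fun γ => E γ y)) α := by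
      refine fapply_congr_op hΔ (fun β _ => rfl) (fun β hβ => ?_) α hα
      exact hE.2 β hβ x y
    rw [h1, h2, fapply_mul hΔ hD _ _ α hα]
    refine Finset.sum_congr rfl fun β _ => ?_
    rw [fapply_end, fapply_end]

/-- uniqueness of inverses modulo a co-ideal -/
lemma inv_unique {R : Type*} [Ring R] {Δ : Set (MIdx p)} (hΔ : IsCoideal Δ)
    {x y z : MIdx p → R}
    (hxy : ∀ α ∈ Δ, sconv x y α = one' α) (hzx : ∀ α ∈ Δ, sconv z x α = one' α) :
    ∀ α ∈ Δ, y α = z α := by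
  intro α hα
  have h1 : y α = sconv (sconv z x) y α := by
    rw [sconv_congr hΔ hzx (fun β _ => rfl) α hα, one'_sconv]
  have h2 : sconv (sconv z x) y α = sconv z one' α := by
    rw [sconv_assoc]
    exact sconv_congr hΔ (fun β _ => rfl) hxy α hα
  rw [h1, h2, sconv_one']

end HSLemmas2
section SubstLemmas
variable {A : Type*} [CommRing A] {p q : ℕ} {Δ : Set (MIdx p)} {nab : Set (MIdx q)}

lemma SubstMap.c_van (φ : SubstMap A p q Δ nab) {α : MIdx p} {e : MIdx q}
    (h : wt e < wt α) : φ.C α e = 0 := by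
  by_cases hα : α ∈ Δ
  · by_cases he : e ∈ nab
    · exact φ.c_ord α hα e he h
    · exact φ.c_suppR α e he
  · exact φ.c_suppL α hα e

/-- extending a box-sum when the terms vanish above the cut-off weight -/
lemma sum_box {r : ℕ} {M : Type*} [AddCommMonoid M] (F : MIdx r → M) {n N : ℕ}
    (hF : ∀ α : MIdx r, n < wt α → F α = 0) (hN : n ≤ N) :
    ∑ α ∈ Finset.Iic (fun _ => N : MIdx r), F α
      = ∑ α ∈ Finset.Iic (fun _ => n : MIdx r), F α := by
  refine (Finset.sum_subset ?_ ?_).symm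
  · intro α hα
    exact Finset.mem_Iic.mpr fun i => le_trans (Finset.mem_Iic.mp hα i) hN
  · intro α _ hα
    exact hF α (wt_gt_of_not_mem_box hα)

lemma SubstMap.app_box (φ : SubstMap A p q Δ nab) (f : MIdx p → A) (e : MIdx q)
    {N : ℕ} (hN : wt e ≤ N) :
    φ.app f e = ∑ α ∈ Finset.Iic (fun _ => N : MIdx p), φ.C α e * f α := by
  rw [SubstMap.app]
  exact (sum_box _ (fun α h => by rw [φ.c_van h, zero_mul]) hN).symm

lemma SubstMap.app_congr (φ : SubstMap A p q Δ nab) {f g : MIdx p → A}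
    (h : ∀ α ∈ Δ, f α = g α) (e : MIdx q) : φ.app f e = φ.app g e := by
  rw [SubstMap.app, SubstMap.app]
  refine Finset.sum_congr rfl fun α _ => ?_
  by_cases hα : α ∈ Δ
  · rw [h α hα]
  · rw [φ.c_suppL α hα, zero_mul, zero_mul]

lemma SubstMap.cmul' (φ : SubstMap A p q Δ nab) (hΔ : IsCoideal Δ)
    (α β : MIdx p) {e : MIdx q} (he : e ∈ nab) :
    ∑ u ∈ Finset.Iic e, φ.C α u * φ.C β (e - u) = φ.C (α + β) e := by
  by_cases hα : α ∈ Δ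
  · by_cases hβ : β ∈ Δ
    · exact (φ.c_mul α hα β hβ e he).symm
    · have h1 : α + β ∉ Δ := fun h => hβ (hΔ.2 h (le_add_self))
      rw [φ.c_suppL _ h1]
      refine Finset.sum_eq_zero fun u _ => ?_
      rw [φ.c_suppL β hβ, mul_zero]
  · have h1 : α + β ∉ Δ := fun h => hα (hΔ.2 h (le_self_add))
    rw [φ.c_suppL _ h1]
    refine Finset.sum_eq_zero fun u _ => ?_
    rw [φ.c_suppL α hα, zero_mul]

/-- `φ` is multiplicative on series -/
lemma SubstMap.app_mul (φ : SubstMap A p q Δ nab) (hΔ : IsCoideal Δ)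
    (f g : MIdx p → A) {e : MIdx q} (he : e ∈ nab) :
    φ.app (sconv f g) e = sconv (φ.app f) (φ.app g) e := by
  classical
  set B := Finset.Iic (fun _ => wt e : MIdx p) with hB
  have hR : sconv (φ.app f) (φ.app g) e
      = ∑ α ∈ B, ∑ γ ∈ B, φ.C (α + γ) e * (f α * g γ) := by
    rw [sconv]
    have h1 : ∀ u ∈ Finset.Iic e,
        φ.app f u * φ.app g (e - u)
          = ∑ α ∈ B, ∑ γ ∈ B, (φ.C α u * f α) * (φ.C γ (e - u) * g γ) := by
      intro u hu
      rw [φ.app_box f u (wt_mono (Finset.mem_Iic.mp hu)),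
        φ.app_box g (e - u) (wt_mono (tsub_le_self : e - u ≤ e)), Finset.sum_mul_sum]
    rw [Finset.sum_congr rfl h1, Finset.sum_comm]
    refine Finset.sum_congr rfl fun α _ => ?_
    rw [Finset.sum_comm]
    refine Finset.sum_congr rfl fun γ _ => ?_
    rw [← φ.cmul' hΔ α γ he, Finset.sum_mul]
    exact Finset.sum_congr rfl fun u _ => by ring
  have hL : φ.app (sconv f g) e
      = ∑ β ∈ B, ∑ γ ∈ Finset.Iic β, φ.C β e * (f γ * g (β - γ)) := by
    rw [SubstMap.app]
    refine Finset.sum_congr rfl fun β _ => ?_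
    rw [sconv, Finset.mul_sum]
  rw [hL, hR]
  rw [Finset.sum_sigma', ← Finset.sum_product']
  rw [← Finset.sum_subset (Finset.filter_subset (fun x => x.1 + x.2 ∈ B) (B ×ˢ B)) ?_]
  · refine Finset.sum_nbij' (fun x => (x.2, x.1 - x.2)) (fun x => ⟨x.1 + x.2, x.1⟩) ?_ ?_ ?_ ?_ ?_
    · rintro ⟨β, γ⟩ hx
      simp only [hB, Finset.mem_sigma, Finset.mem_Iic, Finset.mem_filter, Finset.mem_product] at hx ⊢
      refine ⟨⟨fun i => le_trans (hx.2 i) (hx.1 i), fun i => le_trans (tsub_le_self (a := β) (b := γ) i) (hx.1 i)⟩, ?_⟩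
      rw [add_tsub_cancel_of_le hx.2]
      exact hx.1
    · rintro ⟨x, y⟩ hx
      simp only [Finset.mem_filter, Finset.mem_product, Finset.mem_sigma, Finset.mem_Iic] at hx ⊢
      exact ⟨hx.2, le_self_add⟩
    · rintro ⟨β, γ⟩ hx
      simp only [Finset.mem_sigma, Finset.mem_Iic] at hx
      simp [add_tsub_cancel_of_le hx.2]
    · rintro ⟨x, y⟩ _
      simp [add_tsub_cancel_left]
    · rintro ⟨β, γ⟩ hx
      simp only [Finset.mem_sigma, Finset.mem_Iic] at hx
      rw [add_tsub_cancel_of_le hx.2]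
  · intro x hx hx'
    have hnm : x.1 + x.2 ∉ B := by
      intro hmem
      exact hx' (Finset.mem_filter.mpr ⟨hx, hmem⟩)
    rw [hB] at hnm
    rw [φ.c_van (wt_gt_of_not_mem_box hnm), zero_mul]

end SubstLemmas
section Bullet
variable {k : Type*} [CommRing k] {A : Type*} [CommRing A] [Algebra k A]
  {p q : ℕ} {Δ : Set (MIdx p)} {nab : Set (MIdx q)}

lemma wt_zero {r : ℕ} : wt (0 : MIdx r) = 0 := by simp [wt]

lemma SubstMap.bulletEnd_apply (φ : SubstMap A p q Δ nab) (D : MIdx p → Module.End k A)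
    (e : MIdx q) (a : A) : (φ.bulletEnd D) e a = φ.app (fun α => D α a) e := by
  rw [SubstMap.bulletEnd, SubstMap.app, LinearMap.sum_apply]
  exact Finset.sum_congr rfl fun α _ => by rw [LinearMap.smul_apply, smul_eq_mul]

/-- monomial series -/
def dmon {r : ℕ} {A : Type*} [Zero A] (α : MIdx r) (a : A) : MIdx r → A := fun β => if β = α then a else 0

lemma SubstMap.app_delta (φ : SubstMap A p q Δ nab) (α : MIdx p) (u : MIdx q) :
    φ.app (dmon α (1 : A)) u = φ.C α u := by
  rw [SubstMap.app]
  simp only [dmon]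
  by_cases hα : α ∈ Finset.Iic (fun _ => wt u : MIdx p)
  · rw [Finset.sum_eq_single α]
    · simp
    · intro β _ hne; simp [hne]
    · intro h; exact absurd hα h
  · rw [φ.c_van (wt_gt_of_not_mem_box hα)]
    refine Finset.sum_eq_zero fun β hβ => ?_
    have hne : β ≠ α := fun h => hα (h ▸ hβ)
    simp [hne]

lemma SubstMap.app_delta0 (φ : SubstMap A p q Δ nab) (a : A) {u : MIdx q} (hu : u ∈ nab) :
    φ.app (fun β => if β = 0 then a else 0) u = (if u = 0 then a else 0) := by
  rw [SubstMap.app, Finset.sum_eq_single 0]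
  · rw [φ.c_zero u hu]
    by_cases h : u = 0 <;> simp [h]
  · intro β _ hne; simp [hne]
  · intro h; exact absurd (Finset.mem_Iic.mpr zero_le) h

lemma SubstMap.bulletEnd_zero (φ : SubstMap A p q Δ nab) (hnab : IsCoideal nab)
    {D : MIdx p → Module.End k A} (hD : D 0 = 1) : φ.bulletEnd D 0 = 1 := by
  rw [SubstMap.bulletEnd]
  have h1 : (fun _ => wt (0 : MIdx q) : MIdx p) = (0 : MIdx p) := by
    funext i; simp [wt]
  rw [h1, Iic_zero_midx, Finset.sum_singleton, φ.c_zero 0 (coideal_zero_mem hnab)]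
  simp [hD]

/-- `φ • D` is an HS-derivation -/
lemma IsHS.bullet (hΔ : IsCoideal Δ) (hnab : IsCoideal nab)
    (φ : SubstMap A p q Δ nab) {D : MIdx p → Module.End k A}
    (hD : IsHS k A Δ D) : IsHS k A nab (φ.bulletEnd D) := by
  constructor
  · exact φ.bulletEnd_zero hnab hD.1
  · intro e he x y
    have h1 : (φ.bulletEnd D) e (x * y) = φ.app (HS.sconv (fun α => D α x) (fun α => D α y)) e := by
      rw [φ.bulletEnd_apply]
      refine φ.app_congr (fun α hα => ?_) e
      rw [hD.2 α hα x y]; rfl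
    rw [h1, φ.app_mul hΔ _ _ he, HS.sconv]
    refine Finset.sum_congr rfl fun u _ => ?_
    rw [φ.bulletEnd_apply, φ.bulletEnd_apply]

end Bullet
section KeyM
variable {k : Type*} [CommRing k] {A : Type*} [CommRing A] [Algebra k A]
  {p q : ℕ} {Δ : Set (MIdx p)} {nab : Set (MIdx q)}

lemma box_subset {r : ℕ} {n N : ℕ} (h : n ≤ N) :
    (Finset.Iic (fun _ => n : MIdx r)) ⊆ Finset.Iic (fun _ => N : MIdx r) := by
  intro α hα
  exact Finset.mem_Iic.mpr fun i => le_trans (Finset.mem_Iic.mp hα i) h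

lemma fapply_sum {r : ℕ} {M N : Type*} [AddCommMonoid M] [AddCommMonoid N]
    [Module k M] [Module k N] (f : MIdx r → (M →ₗ[k] N)) {ι : Type*} (s : Finset ι)
    (F : ι → MIdx r → M) (γ : MIdx r) :
    fapply f (fun β => ∑ i ∈ s, F i β) γ = ∑ i ∈ s, fapply f (F i) γ := by
  rw [fapply]
  rw [show (∑ β ∈ Finset.Iic γ, f β (∑ i ∈ s, F i (γ - β)))
      = ∑ β ∈ Finset.Iic γ, ∑ i ∈ s, f β (F i (γ - β)) from
    Finset.sum_congr rfl fun β _ => map_sum ..]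
  rw [Finset.sum_comm]
  rfl

lemma SubstMap.app_sum (φ : SubstMap A p q Δ nab) {ι : Type*} (s : Finset ι)
    (F : ι → MIdx p → A) (e : MIdx q) :
    φ.app (fun β => ∑ i ∈ s, F i β) e = ∑ i ∈ s, φ.app (F i) e := by
  rw [SubstMap.app]
  rw [show (∑ α ∈ Finset.Iic (fun _ => wt e : MIdx p), φ.C α e * ∑ i ∈ s, F i α)
      = ∑ α ∈ Finset.Iic (fun _ => wt e : MIdx p), ∑ i ∈ s, φ.C α e * F i α from
    Finset.sum_congr rfl fun α _ => Finset.mul_sum ..]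
  rw [Finset.sum_comm]
  rfl

lemma fapply_mono (D : MIdx p → Module.End k A) (α : MIdx p) (a : A) :
    fapply D (dmon α a) = HS.sconv (dmon α (1 : A)) (fun γ => D γ a) := by
  funext β
  have hL : fapply D (dmon α a) β = (if α ≤ β then D (β - α) a else 0) := by
    rw [fapply]
    by_cases hle : α ≤ β
    · rw [Finset.sum_eq_single (β - α)]
      · rw [if_pos hle]
        have : β - (β - α) = α := tsub_tsub_cancel_of_le hle
        rw [this, dmon, if_pos rfl]
      · intro c hc hne
        have : β - c ≠ α := by
          intro h
          apply hne
          have hcβ := Finset.mem_Iic.mp hc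
          have : β = c + α := by
            rw [← h, add_tsub_cancel_of_le hcβ]
          rw [this, add_tsub_cancel_right]
        rw [dmon, if_neg this, map_zero]
      · intro h; exact absurd (Finset.mem_Iic.mpr tsub_le_self) h
    · rw [if_neg hle]
      refine Finset.sum_eq_zero fun c hc => ?_
      have : β - c ≠ α := by
        intro h
        exact hle (h ▸ tsub_le_self)
      rw [dmon, if_neg this, map_zero]
  have hR : HS.sconv (dmon α (1 : A)) (fun γ => D γ a) β
      = (if α ≤ β then D (β - α) a else 0) := by
    rw [HS.sconv]
    by_cases hle : α ≤ β
    · rw [Finset.sum_eq_single α]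
      · rw [if_pos hle, dmon, if_pos rfl, one_mul]
      · intro c _ hne; rw [dmon, if_neg hne, zero_mul]
      · intro h; exact absurd (Finset.mem_Iic.mpr hle) h
    · rw [if_neg hle]
      refine Finset.sum_eq_zero fun c hc => ?_
      have hne : c ≠ α := fun h => hle (h ▸ Finset.mem_Iic.mp hc)
      rw [dmon, if_neg hne, zero_mul]
  rw [hL, hR]

/-- the fundamental computation: `Z̃ ∘ φ ∘ D̃` has the coefficients `fapply Z (φ.C α)` -/
lemma keyM (hΔ : IsCoideal Δ) (hnab : IsCoideal nab) (φ : SubstMap A p q Δ nab)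
    {D : MIdx p → Module.End k A} (hD : IsHS k A Δ D)
    {Z : MIdx q → Module.End k A} (hZ : IsHS k A nab Z)
    (hZl : ∀ w ∈ nab, HS.sconv Z (φ.bulletEnd D) w = one' w)
    (g : MIdx p → A) {e : MIdx q} (he : e ∈ nab) :
    ∑ α ∈ Finset.Iic (fun _ => wt e : MIdx p), fapply Z (φ.C α) e * g α
      = fapply Z (φ.app (fapply D g)) e := by
  classical
  set B := Finset.Iic (fun _ => wt e : MIdx p) with hBdef
  set g₁ : MIdx p → A := fun β => if β ∈ B then g β else 0 with hg₁def
  -- the monomial case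
  have hmono : ∀ (α : MIdx p) (a : A),
      fapply Z (φ.app (fapply D (dmon α a))) e = fapply Z (φ.C α) e * a := by
    intro α a
    have h1 : ∀ u ∈ nab, φ.app (fapply D (dmon α a)) u
        = HS.sconv (φ.C α) (fun w => (φ.bulletEnd D) w a) u := by
      intro u hu
      rw [fapply_mono, φ.app_mul hΔ _ _ hu, HS.sconv, HS.sconv]
      refine Finset.sum_congr rfl fun v _ => ?_
      rw [φ.app_delta, φ.bulletEnd_apply]
    have h2 : fapply Z (φ.app (fapply D (dmon α a))) e
        = fapply Z (HS.sconv (φ.C α) (fun w => (φ.bulletEnd D) w a)) e :=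
      fapply_congr_op hnab (fun β _ => rfl) h1 e he
    rw [h2, fapply_mul hnab hZ _ _ e he]
    have h3 : ∀ w ∈ nab, fapply Z (fun w' => (φ.bulletEnd D) w' a) w
        = (if w = 0 then a else 0) := by
      intro w hw
      rw [fapply_end, hZl w hw, one'_end_apply]
    have h4 : HS.sconv (fapply Z (φ.C α)) (fapply Z (fun w' => (φ.bulletEnd D) w' a)) e
        = HS.sconv (fapply Z (φ.C α)) (fun w => if w = 0 then a else 0) e :=
      sconv_congr hnab (fun w _ => rfl) h3 e he
    rw [h4, HS.sconv, Finset.sum_eq_single e]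
    · simp
    · intro v hv hne
      have : ¬ (e - v = 0) := by
        intro h0
        exact hne (le_antisymm (Finset.mem_Iic.mp hv) (tsub_eq_zero_iff_le.mp h0))
      simp [this]
    · intro h; exact absurd (Finset.mem_Iic.mpr le_rfl) h
  -- reduction to `g₁`
  have hred : fapply Z (φ.app (fapply D g)) e = fapply Z (φ.app (fapply D g₁)) e := by
    rw [fapply, fapply]
    refine Finset.sum_congr rfl fun b hb => ?_
    congr 1
    rw [SubstMap.app, SubstMap.app]
    refine Finset.sum_congr rfl fun α hα => ?_
    congr 1
    rw [fapply, fapply]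
    refine Finset.sum_congr rfl fun c hc => ?_
    congr 1
    have hαB : α ∈ B := by
      refine box_subset (wt_mono (tsub_le_self : e - b ≤ e)) hα
    have hmem : α - c ∈ B := by
      refine Finset.mem_Iic.mpr (le_trans ?_ (Finset.mem_Iic.mp hαB))
      exact tsub_le_self
    rw [hg₁def]
    simp [hmem]
  -- `g₁` as a sum of monomials
  have hg₁ : g₁ = fun β => ∑ α ∈ B, dmon α (g α) β := by
    funext β
    rw [hg₁def]
    simp only [dmon]
    rw [Finset.sum_ite_eq B β (fun α => g α)]
  rw [hred, hg₁]
  have hsum : fapply Z (φ.app (fapply D (fun β => ∑ α ∈ B, dmon α (g α) β))) e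
      = ∑ α ∈ B, fapply Z (φ.app (fapply D (dmon α (g α)))) e := by
    have e1 : fapply D (fun β => ∑ α ∈ B, dmon α (g α) β)
        = fun γ => ∑ α ∈ B, fapply D (dmon α (g α)) γ := by
      funext γ; exact fapply_sum D B _ γ
    rw [e1]
    have e2 : φ.app (fun γ => ∑ α ∈ B, fapply D (dmon α (g α)) γ)
        = fun u => ∑ α ∈ B, φ.app (fapply D (dmon α (g α))) u := by
      funext u; exact φ.app_sum B _ u
    rw [e2]
    exact fapply_sum Z B _ e
  rw [hsum]
  refine Finset.sum_congr rfl fun α hα => ?_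
  rw [hmono α (g α)]

end KeyM
section PhiD
variable {k : Type*} [CommRing k] {A : Type*} [CommRing A] [Algebra k A]
  {p q : ℕ} {Δ : Set (MIdx p)} {nab : Set (MIdx q)}

/-- the substitution map `φ^D = Z̃ ∘ φ ∘ D̃` where `Z = (φ•D)*` -/
noncomputable def phiD (hΔ : IsCoideal Δ) (hnab : IsCoideal nab) (φ : SubstMap A p q Δ nab)
    {Z : MIdx q → Module.End k A} (hZ : IsHS k A nab Z) : SubstMap A p q Δ nab where
  C := fun α e => if e ∈ nab then fapply Z (φ.C α) e else 0
  c_zero := by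
    intro e he
    rw [if_pos he]
    have h1 : fapply Z (φ.C 0) e = fapply Z (fun u => if u = 0 then (1 : A) else 0) e := by
      rw [fapply, fapply]
      refine Finset.sum_congr rfl fun b hb => ?_
      congr 1
      exact φ.c_zero _ (hnab.2 he (tsub_le_self : e - b ≤ e))
    rw [h1, fapply, Finset.sum_eq_single e]
    · rw [tsub_self]
      simp only [if_pos rfl]
      exact hs_one hnab hZ e he
    · intro b hb hne
      have : ¬ (e - b = 0) := by
        intro h0
        exact hne (le_antisymm (Finset.mem_Iic.mp hb) (tsub_eq_zero_iff_le.mp h0))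
      rw [if_neg this, map_zero]
    · intro h; exact absurd (Finset.mem_Iic.mpr le_rfl) h
  c_mul := by
    intro α hα β hβ e he
    rw [if_pos he]
    have h1 : fapply Z (φ.C (α + β)) e = fapply Z (HS.sconv (φ.C α) (φ.C β)) e := by
      refine fapply_congr_op hnab (fun b _ => rfl) (fun u hu => ?_) e he
      exact φ.c_mul α hα β hβ u hu
    rw [h1, fapply_mul hnab hZ _ _ e he, HS.sconv]
    refine Finset.sum_congr rfl fun u hu => ?_
    rw [if_pos (hnab.2 he (Finset.mem_Iic.mp hu)),
      if_pos (hnab.2 he (tsub_le_self : e - u ≤ e))]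
  c_ord := by
    intro α hα e he hlt
    rw [if_pos he, fapply]
    refine Finset.sum_eq_zero fun b _ => ?_
    rw [φ.c_van (lt_of_le_of_lt (wt_mono (tsub_le_self : e - b ≤ e)) hlt), map_zero]
  c_suppL := by
    intro α hα e
    by_cases he : e ∈ nab
    · rw [if_pos he, fapply]
      refine Finset.sum_eq_zero fun b _ => ?_
      rw [φ.c_suppL α hα, map_zero]
    · rw [if_neg he]
  c_suppR := by
    intro α e he
    rw [if_neg he]

variable (hΔ : IsCoideal Δ) (hnab : IsCoideal nab) (φ : SubstMap A p q Δ nab)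
  {Z : MIdx q → Module.End k A} (hZ : IsHS k A nab Z)

lemma phiD_app (g : MIdx p → A) {e : MIdx q} (he : e ∈ nab) :
    (phiD hΔ hnab φ hZ).app g e
      = ∑ α ∈ Finset.Iic (fun _ => wt e : MIdx p), fapply Z (φ.C α) e * g α := by
  rw [SubstMap.app]
  refine Finset.sum_congr rfl fun α _ => ?_
  show (if e ∈ nab then fapply Z (φ.C α) e else 0) * g α = _
  rw [if_pos he]

variable {D E : MIdx p → Module.End k A} (hD : IsHS k A Δ D)
  (hZl : ∀ w ∈ nab, HS.sconv Z (φ.bulletEnd D) w = one' w)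
  (hED : ∀ α ∈ Δ, HS.sconv D E α = one' α)

include hΔ hD hZl hED in
lemma phiD_bullet : ∀ e ∈ nab, (phiD hΔ hnab φ hZ).bulletEnd E e = Z e := by
  intro e he
  refine LinearMap.ext fun a => ?_
  rw [SubstMap.bulletEnd_apply, phiD_app hΔ hnab φ hZ _ he,
    keyM hΔ hnab φ hD hZ hZl _ he]
  have h1 : ∀ u ∈ nab, φ.app (fapply D fun α => E α a) u = (if u = 0 then a else 0) := by
    intro u hu
    have h2 : φ.app (fapply D fun α => E α a) u = φ.app (fun α => if α = 0 then a else 0) u := by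
      refine φ.app_congr (fun α hα => ?_) u
      rw [show fapply D (fun γ => E γ a) α = HS.sconv D E α a from fapply_end D E a α,
        hED α hα, one'_end_apply]
    rw [h2]
    have h3 : (fun α : MIdx p => if α = 0 then a else 0) = dmon 0 a := rfl
    rw [h3]
    rw [show φ.app (dmon 0 a) u = _ from rfl]
    rw [SubstMap.app, Finset.sum_eq_single 0]
    · rw [φ.c_zero u hu, dmon]
      by_cases h : u = 0 <;> simp [h]
    · intro β _ hne
      rw [dmon, if_neg hne, mul_zero]
    · intro h; exact absurd (Finset.mem_Iic.mpr zero_le) h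
  have h4 : fapply Z (φ.app (fapply D fun α => E α a)) e
      = fapply Z (fun u => if u = 0 then a else 0) e :=
    fapply_congr_op hnab (fun b _ => rfl) h1 e he
  rw [h4, fapply, Finset.sum_eq_single e]
  · rw [tsub_self, if_pos rfl]
  · intro b hb hne
    have : ¬ (e - b = 0) := by
      intro h0
      exact hne (le_antisymm (Finset.mem_Iic.mp hb) (tsub_eq_zero_iff_le.mp h0))
    rw [if_neg this, map_zero]
  · intro h; exact absurd (Finset.mem_Iic.mpr le_rfl) h

include hD hZl hED in
lemma phiD_inter (f : MIdx p → A) {e : MIdx q} (he : e ∈ nab) :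
    fapply ((phiD hΔ hnab φ hZ).bulletEnd E) (φ.app f) e
      = (phiD hΔ hnab φ hZ).app (fapply E f) e := by
  have h1 : fapply ((phiD hΔ hnab φ hZ).bulletEnd E) (φ.app f) e
      = fapply Z (φ.app f) e :=
    fapply_congr_op hnab (phiD_bullet hΔ hnab φ hZ hD hZl hED) (fun b _ => rfl) e he
  rw [h1, phiD_app hΔ hnab φ hZ _ he, keyM hΔ hnab φ hD hZ hZl _ he]
  refine fapply_congr_op hnab (fun b _ => rfl) (fun u _ => ?_) e he
  refine (φ.app_congr (fun α hα => ?_) u).symm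
  rw [fapply_fapply]
  have h2 : fapply (HS.sconv D E) f α = fapply one' f α :=
    fapply_congr_op hΔ hED (fun b _ => rfl) α hα
  rw [h2, fapply_one']

end PhiD
section OpLemmas
variable {p : ℕ} {R : Type*} [Ring R]

lemma op_sum {ι : Type*} (s : Finset ι) (f : ι → R) :
    MulOpposite.op (∑ i ∈ s, f i) = ∑ i ∈ s, MulOpposite.op (f i) :=
  map_sum (MulOpposite.opAddEquiv : R ≃+ Rᵐᵒᵖ) f s

lemma op_sconv (f g : MIdx p → R) (α : MIdx p) :
    HS.sconv (fun β => MulOpposite.op (f β)) (fun β => MulOpposite.op (g β)) α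
      = MulOpposite.op (HS.sconv g f α) := by
  rw [HS.sconv, HS.sconv, op_sum]
  rw [sum_Iic_reflect α (fun x y => MulOpposite.op (g x * f y))]
  refine Finset.sum_congr rfl fun β _ => ?_
  rw [← MulOpposite.op_mul]

lemma one'_op (α : MIdx p) : (one' α : Rᵐᵒᵖ) = MulOpposite.op (one' α) := by
  by_cases h : α = 0 <;> simp [one', h]

lemma bulletS_op {A : Type*} [CommRing A] {p q : ℕ} {Δ : Set (MIdx p)} {nab : Set (MIdx q)}
    (φ : SubstMap A p q Δ nab) (ι : A → R) (r : MIdx p → R) (e : MIdx q) :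
    φ.bulletS (fun a => MulOpposite.op (ι a)) (fun α => MulOpposite.op (r α)) e
      = MulOpposite.op (φ.bulletSR ι r e) := by
  rw [SubstMap.bulletS, SubstMap.bulletSR, op_sum]
  refine Finset.sum_congr rfl fun α _ => ?_
  rw [← MulOpposite.op_mul]

lemma bulletSR_congr {A : Type*} [CommRing A] {p q : ℕ} {Δ : Set (MIdx p)}
    {nab : Set (MIdx q)} (φ : SubstMap A p q Δ nab) {ι : A → R} (hι : ι 0 = 0)
    {r r' : MIdx p → R} (h : ∀ α ∈ Δ, r α = r' α) (e : MIdx q) :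
    φ.bulletSR ι r e = φ.bulletSR ι r' e := by
  rw [SubstMap.bulletSR, SubstMap.bulletSR]
  refine Finset.sum_congr rfl fun α _ => ?_
  by_cases hα : α ∈ Δ
  · rw [h α hα]
  · rw [φ.c_suppL α hα, hι, mul_zero, mul_zero]

end OpLemmas

section AppInv
variable {k : Type*} [CommRing k] {A : Type*} [CommRing A] [Algebra k A]
  {p q : ℕ} {Δ : Set (MIdx p)} {nab : Set (MIdx q)}

lemma SubstMap.app_fapply_inv (φ : SubstMap A p q Δ nab)
    {D E : MIdx p → Module.End k A} (hED : ∀ α ∈ Δ, HS.sconv D E α = one' α)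
    (a : A) {u : MIdx q} (hu : u ∈ nab) :
    φ.app (fapply D fun α => E α a) u = (if u = 0 then a else 0) := by
  have h2 : φ.app (fapply D fun α => E α a) u = φ.app (dmon 0 a) u := by
    refine φ.app_congr (fun α hα => ?_) u
    rw [show fapply D (fun γ => E γ a) α = HS.sconv D E α a from fapply_end D E a α,
      hED α hα, one'_end_apply]
    rfl
  rw [h2, SubstMap.app, Finset.sum_eq_single 0]
  · rw [φ.c_zero u hu, dmon]
    by_cases h : u = 0 <;> simp [h]
  · intro β _ hne
    rw [dmon, if_neg hne, mul_zero]
  · intro h; exact absurd (Finset.mem_Iic.mpr zero_le) h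

end AppInv

/-- Let `Ψ` be a pre-HS-structure on a `k`-algebra `R` over `A`,
let `star` assign to each Hasse–Schmidt derivation an inverse, and let
`Γ^p_Δ(D) := Ψ^p_Δ(D*)`, viewed with values in the opposite ring `Rᵐᵒᵖ`.
Then `Γ` is a HS-structure on `Rᵐᵒᵖ` over `A/k` if and only if
`Ψ^q_∇(φ•D) = Ψ^p_Δ(D) • φ^D` for every substitution map `φ` and every
Hasse–Schmidt derivation `D` (where `φ^D` is the unique substitution map with
`(φ•D)~ ∘ φ^D = φ ∘ D̃`). -/
theorem stmt16 (k A R : Type*) [CommRing k] [CommRing A] [Algebra k A]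
    [Ring R] [Algebra k R] (ι : A →ₐ[k] R)
    (Ψ : RSystem k A R) (hΨ : IsPreHSStr k A R (⇑ι) Ψ)
    (star : ∀ (p : ℕ), Set (MIdx p) → (MIdx p → Module.End k A) → (MIdx p → Module.End k A))
    (hstar : ∀ (p : ℕ) (Δ : Set (MIdx p)), IsCoideal Δ →
      ∀ D : MIdx p → Module.End k A, IsHS k A Δ D →
        IsHS k A Δ (star p Δ D)
        ∧ (∀ α ∈ Δ, sconv D (star p Δ D) α = (one' : MIdx p → Module.End k A) α)
        ∧ (∀ α ∈ Δ, sconv (star p Δ D) D α = (one' : MIdx p → Module.End k A) α)) :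
    -- (1) `Γ = Ψ ∘ star`, with values in `Rᵐᵒᵖ`, is a HS-structure on `Rᵐᵒᵖ` over `A/k`
    (IsHSStr k A Rᵐᵒᵖ (fun a => MulOpposite.op (ι a))
      (fun p Δ D α => MulOpposite.op (Ψ p Δ (star p Δ D) α)))
    ↔
    -- (2) `Ψ^q_∇(φ•D) = Ψ^p_Δ(D) • φ^D` for all substitution maps `φ` and all `D`
    (∀ (p q : ℕ) (Δ : Set (MIdx p)) (nab : Set (MIdx q)),
      IsCoideal Δ → IsCoideal nab →
      ∀ φ : SubstMap A p q Δ nab,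
      ∀ D : MIdx p → Module.End k A, IsHS k A Δ D →
      ∀ φD : SubstMap A p q Δ nab,
        (∀ f : MIdx p → A, ∀ e ∈ nab,
          fapply (φ.bulletEnd D) (φD.app f) e = φ.app (fapply D f) e) →
        ∀ e ∈ nab, Ψ q nab (φ.bulletEnd D) e = φD.bulletSR (⇑ι) (Ψ p Δ D) e) := by
  constructor
  · -- (1) → (2)
    intro h1 p q Δ nab hΔ hnab φ D hD φD hint e he
    set E := star p Δ D with hEdef
    obtain ⟨hE, hDE1, hDE2⟩ := hstar p Δ hΔ D hD
    have hφD : IsHS k A nab (φ.bulletEnd D) := IsHS.bullet hΔ hnab φ hD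
    have hx : IsHS k A nab (φD.bulletEnd E) := IsHS.bullet hΔ hnab φD hE
    -- `φ•D` is a left inverse of `φD•E`
    have h_side : ∀ w ∈ nab, sconv (φ.bulletEnd D) (φD.bulletEnd E) w = one' w := by
      intro w hw
      refine LinearMap.ext fun a => ?_
      have e1 : (sconv (φ.bulletEnd D) (φD.bulletEnd E) w) a
          = fapply (φ.bulletEnd D) (fun u => (φD.bulletEnd E) u a) w :=
        (fapply_end _ _ a w).symm
      have e2 : (fun u => (φD.bulletEnd E) u a) = fun u => φD.app (fun α => E α a) u :=
        funext fun u => φD.bulletEnd_apply E u a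
      rw [e1, e2, hint (fun α => E α a) w hw,
        φ.app_fapply_inv hDE1 a hw, one'_end_apply]
    -- hence `star (φD•E)` agrees with `φ•D` on `nab`
    obtain ⟨hSx, hSx1, hSx2⟩ := hstar q nab hnab (φD.bulletEnd E) hx
    have hagr : ∀ w ∈ nab, star q nab (φD.bulletEnd E) w = (φ.bulletEnd D) w :=
      inv_unique hnab hSx1 h_side
    -- `star E` agrees with `D` on `Δ`
    obtain ⟨hSE, hSE1, hSE2⟩ := hstar p Δ hΔ E hE
    have hagr2 : ∀ α ∈ Δ, star p Δ E α = D α :=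
      inv_unique hΔ hSE1 hDE1
    -- apply the HS-structure property of `Γ` for `φD` at the derivation `E`
    have hΓ := (h1 p Δ hΔ E hE).2.2.2.2.2 q nab hnab φD e he
    rw [bulletS_op] at hΓ
    have hmain : Ψ q nab (star q nab (φD.bulletEnd E)) e
        = φD.bulletSR (⇑ι) (Ψ p Δ (star p Δ E)) e := MulOpposite.op_injective hΓ
    have hL : Ψ q nab (star q nab (φD.bulletEnd E)) e = Ψ q nab (φ.bulletEnd D) e :=
      (hΨ q nab hnab (star q nab (φD.bulletEnd E)) hSx).2.1 (φ.bulletEnd D) hφD hagr e he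
    have hR : φD.bulletSR (⇑ι) (Ψ p Δ (star p Δ E)) e
        = φD.bulletSR (⇑ι) (Ψ p Δ D) e := by
      refine bulletSR_congr φD (map_zero ι) (fun α hα => ?_) e
      exact (hΨ p Δ hΔ (star p Δ E) hSE).2.1 D hD hagr2 α hα
    rw [← hL, hmain, hR]
  · -- (2) → (1)
    intro h2 p Δ hΔ D hD
    obtain ⟨hE, hDE1, hDE2⟩ := hstar p Δ hΔ D hD
    obtain ⟨hc1, hc2, hc3, hc4, hc5, _⟩ := hΨ p Δ hΔ (star p Δ D) hE
    refine ⟨?_, ?_, ?_, ?_, ?_, ?_⟩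
    · -- value at 0
      dsimp only
      rw [hc1, MulOpposite.op_one]
    · -- independence of representative
      intro D' hD' hagree α hα
      dsimp only
      obtain ⟨hSD', hSD'1, hSD'2⟩ := hstar p Δ hΔ D' hD'
      have hzx : ∀ β ∈ Δ, sconv (star p Δ D') D β = one' β := by
        intro β hβ
        rw [sconv_congr hΔ (fun γ _ => rfl) hagree β hβ]
        exact hSD'2 β hβ
      have hag : ∀ β ∈ Δ, (star p Δ D) β = star p Δ D' β :=
        inv_unique hΔ hDE1 hzx
      congr 1
      exact hc2 (star p Δ D') hSD' hag α hα
    · -- multiplicativity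
      intro E' hE' α hα
      dsimp only
      have hprod : IsHS k A Δ (sconv D E') := sconv_isHS hΔ hD hE'
      obtain ⟨hW, hW1, hW2⟩ := hstar p Δ hΔ (sconv D E') hprod
      obtain ⟨hSE', hSE'1, hSE'2⟩ := hstar p Δ hΔ E' hE'
      have hz : IsHS k A Δ (sconv (star p Δ E') (star p Δ D)) := sconv_isHS hΔ hSE' hE
      have hzx : ∀ β ∈ Δ, sconv (sconv (star p Δ E') (star p Δ D)) (sconv D E') β = one' β := by
        intro β hβ
        rw [sconv_assoc]
        have hin : ∀ γ ∈ Δ, sconv (star p Δ D) (sconv D E') γ = E' γ := by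
          intro γ hγ
          rw [← sconv_assoc]
          rw [sconv_congr hΔ hDE2 (fun w _ => rfl) γ hγ]
          rw [show sconv one' E' = E' from one'_sconv E']
        rw [sconv_congr hΔ (fun w _ => rfl) hin β hβ]
        exact hSE'2 β hβ
      have hag : ∀ β ∈ Δ, star p Δ (sconv D E') β = sconv (star p Δ E') (star p Δ D) β :=
        inv_unique hΔ hW1 hzx
      have t1 : Ψ p Δ (star p Δ (sconv D E')) α = Ψ p Δ (sconv (star p Δ E') (star p Δ D)) α :=
        (hΨ p Δ hΔ (star p Δ (sconv D E')) hW).2.1 _ hz hag α hα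
      have t2 : Ψ p Δ (sconv (star p Δ E') (star p Δ D)) α
          = sconv (Ψ p Δ (star p Δ E')) (Ψ p Δ (star p Δ D)) α :=
        (hΨ p Δ hΔ (star p Δ E') hSE').2.2.1 (star p Δ D) hE α hα
      rw [op_sconv, t1, t2]
    · -- existence of an inverse
      dsimp only
      obtain ⟨t, ht1, ht2⟩ := hc4
      refine ⟨fun α => MulOpposite.op (t α), fun α hα => ?_, fun α hα => ?_⟩
      · rw [op_sconv, ht2 α hα, one'_op]
      · rw [op_sconv, ht1 α hα, one'_op]
    · -- Leibniz rule
      intro a α hα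
      dsimp only
      rw [op_sconv, op_sconv]
      congr 1
      have t1 := hc5 (fapply D a) α hα
      have t2 : ∀ γ ∈ Δ, ι (fapply (star p Δ D) (fapply D a) γ) = ι (a γ) := by
        intro γ hγ
        congr 1
        rw [fapply_fapply]
        have hcon := fapply_congr_op hΔ (m := a) (m' := a) hDE2 (fun w _ => rfl) γ hγ
        rw [hcon, fapply_one']
      have t3 : sconv (fun γ => ι (fapply (star p Δ D) (fapply D a) γ)) (Ψ p Δ (star p Δ D)) α
          = sconv (fun γ => ι (a γ)) (Ψ p Δ (star p Δ D)) α :=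
        sconv_congr hΔ t2 (fun w _ => rfl) α hα
      rw [t1, t3]
    · -- compatibility with arbitrary substitution maps
      intro q nab hnab φ e he
      dsimp only
      have hφD : IsHS k A nab (φ.bulletEnd D) := IsHS.bullet hΔ hnab φ hD
      obtain ⟨hZ, hZ1, hZ2⟩ := hstar q nab hnab (φ.bulletEnd D) hφD
      set Z := star q nab (φ.bulletEnd D) with hZdef
      set ψ := phiD hΔ hnab φ hZ with hψdef
      have hψE : IsHS k A nab (ψ.bulletEnd (star p Δ D)) := IsHS.bullet hΔ hnab ψ hE
      have hmain := h2 p q Δ nab hΔ hnab ψ (star p Δ D) hE φ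
        (fun f w hw => phiD_inter hΔ hnab φ hZ hD hZ2 hDE1 f hw) e he
      have hagr : ∀ w ∈ nab, ψ.bulletEnd (star p Δ D) w = Z w :=
        phiD_bullet hΔ hnab φ hZ hD hZ2 hDE1
      have hL : Ψ q nab (ψ.bulletEnd (star p Δ D)) e = Ψ q nab Z e :=
        (hΨ q nab hnab (ψ.bulletEnd (star p Δ D)) hψE).2.1 Z hZ hagr e he
      rw [bulletS_op, ← hL, hmain]

end HS
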